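/- Let L ⊆ ℝ × ℝ^d be a lattice in general position, i.e., the restriction of p_1 to L is injective and p_2(L) is dense in ℝ^d. Then there exist a nonzero real number a, an invertible d × d real matrix B, and column vectors α = (α_1, …, α_d)ᵀ, β = (β_1, …, β_d)ᵀ ∈ ℝ^d satisfying: (i) the numbers 1, α_1, …, α_d are linearly independent over the rationals, and (ii) the numbers β_1, …, β_d, 1 + βᵀα are linearly independent over the rationals, such that the invertible linear map T(x, y) = (a x, B y) satisfies T(L) = Γ, where Γ = { ( n + βᵀ(nα + m), nα + m ) : n ∈ ℤ, m ∈ ℤ^d }. -/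

import Mathlib

/-- A lattice in a real normed space: a discrete subgroup whose real span is everything
(i.e. a discrete subgroup of full rank). -/
def IsLattice {E : Type*} [NormedAddCommGroup E] [NormedSpace ℝ E]
    (Γ : AddSubgroup E) : Prop :=
  DiscreteTopology Γ ∧ Submodule.span ℝ (Γ : Set E) = ⊤

/-- The lattice of special form determined by vectors `α, β ∈ ℝ^d`:
`Γ = { (n + βᵀ(nα + m), nα + m) : n ∈ ℤ, m ∈ ℤ^d }`. -/
def specialFormLattice {d : ℕ} (α β : Fin d → ℝ) : Set (ℝ × (Fin d → ℝ)) :=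
  {p | ∃ (n : ℤ) (m : Fin d → ℤ),
    p = ((n : ℝ) + ∑ i, β i * ((n : ℝ) • α + fun j => (m j : ℝ)) i,
         (n : ℝ) • α + fun j => (m j : ℝ))}

/-- Every lattice `L ⊆ ℝ × ℝ^d` in general position (i.e. `p₁|_L` injective, `p₂(L)`
dense) is mapped onto a lattice of special form by an invertible linear transformation
`T(x, y) = (a x, B y)`. -/
theorem exists_special_form {d : ℕ}
    (L : AddSubgroup (ℝ × (Fin d → ℝ))) (hL : IsLattice L)
    (hinj : Set.InjOn Prod.fst (L : Set (ℝ × (Fin d → ℝ))))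
    (hdense : Dense (Prod.snd '' (L : Set (ℝ × (Fin d → ℝ))))) :
    ∃ (a : ℝ) (B : Matrix (Fin d) (Fin d) ℝ) (α β : Fin d → ℝ),
      a ≠ 0 ∧ IsUnit B.det ∧
      LinearIndependent ℚ (fun o : Option (Fin d) => o.elim (1 : ℝ) α) ∧
      LinearIndependent ℚ (fun o : Option (Fin d) =>
        o.elim ((1 : ℝ) + ∑ i, β i * α i) β) ∧
      (fun p : ℝ × (Fin d → ℝ) => (a * p.1, B.mulVec p.2)) ''
          (L : Set (ℝ × (Fin d → ℝ))) = specialFormLattice α β := by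
  classical
  obtain ⟨hLd, hLs⟩ := hL
  -- `L` as a `ℤ`-lattice
  let Lsub : Submodule ℤ (ℝ × (Fin d → ℝ)) := AddSubgroup.toIntSubmodule L
  haveI : DiscreteTopology Lsub := hLd
  haveI : IsZLattice ℝ Lsub := ⟨by rw [AddSubgroup.coe_toIntSubmodule]; exact hLs⟩
  haveI : Module.Finite ℤ Lsub := ZLattice.module_finite ℝ Lsub
  haveI : Module.Free ℤ Lsub := ZLattice.module_free ℝ Lsub
  let b₀ := Module.Free.chooseBasis ℤ Lsub
  have hcard : Fintype.card (Module.Free.ChooseBasisIndex ℤ Lsub) =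
      Fintype.card (Option (Fin d)) := by
    rw [← Module.finrank_eq_card_chooseBasisIndex, ZLattice.rank ℝ Lsub]
    simp; omega
  let e₁ : Module.Free.ChooseBasisIndex ℤ Lsub ≃ Option (Fin d) := Fintype.equivOfCardEq hcard
  let b := b₀.reindex e₁
  let u₀ : Module.Basis (Option (Fin d)) ℝ (ℝ × (Fin d → ℝ)) := b.ofZLatticeBasis ℝ Lsub
  have hspan₀ : Submodule.span ℤ (Set.range u₀) = Lsub := b.ofZLatticeBasis_span ℝ
  -- choose a reordering so that the `p₂`-images of the `some` basis vectors are
  -- linearly independent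
  set f : Option (Fin d) → (Fin d → ℝ) := fun o => (u₀ o).2 with hff
  have hspanf : Submodule.span ℝ (Set.range f) = ⊤ := by
    have h1 : Set.range f = Prod.snd '' Set.range u₀ := by
      rw [hff]; ext y; simp [Set.range_comp]
    have h2 : Submodule.span ℝ (Set.range u₀) = ⊤ := u₀.span_eq
    have h3 : Submodule.map (LinearMap.snd ℝ ℝ (Fin d → ℝ))
        (Submodule.span ℝ (Set.range u₀)) = ⊤ := by
      rw [h2, Submodule.map_top, LinearMap.range_eq_top]
      exact fun y => ⟨(0, y), rfl⟩
    rw [h1, show (Prod.snd '' Set.range ⇑u₀) = ⇑(LinearMap.snd ℝ ℝ (Fin d → ℝ)) ''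
      Set.range ⇑u₀ from rfl, ← Submodule.map_span]
    exact h3
  obtain ⟨s, hss, hsp, hind⟩ := exists_linearIndependent ℝ (Set.range f)
  haveI : Fintype s := Set.Finite.fintype ((Set.finite_range f).subset hss)
  have hcards : Fintype.card s = d := by
    have sb : Module.Basis s ℝ (Fin d → ℝ) := Module.Basis.mk hind (by rw [Subtype.range_coe, hsp, hspanf])
    have := Module.finrank_eq_card_basis sb
    simpa using this.symm
  choose g hg using fun x : s => hss x.2
  have hginj : Function.Injective g := fun x y hxy => Subtype.ext (by rw [← hg x, ← hg y, hxy])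
  let eqv : Fin d ≃ s := (Fintype.equivFinOfCardEq hcards).symm
  let ι : Fin d → Option (Fin d) := g ∘ eqv
  have hιinj : Function.Injective ι := hginj.comp eqv.injective
  have hind' : LinearIndependent ℝ (fun i : Fin d => f (ι i)) := by
    have : (fun i : Fin d => f (ι i)) = (fun x : s => (x : Fin d → ℝ)) ∘ eqv := by
      funext i; simp [ι, hg]
    rw [this]
    exact hind.comp eqv eqv.injective
  have hmiss : ∃ o₀, o₀ ∉ Set.range ι := by
    by_contra h
    push_neg at h
    have hsurj : Function.Surjective ι := fun o => h o
    have := Fintype.card_le_of_surjective ι hsurj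
    simp at this
  obtain ⟨o₀, ho₀⟩ := hmiss
  let F : Option (Fin d) → Option (Fin d) := fun o => o.elim o₀ ι
  have hFinj : Function.Injective F := by
    rintro (_ | x) (_ | y) hxy
    · rfl
    · exact absurd hxy.symm (fun h => ho₀ ⟨y, h⟩)
    · exact absurd hxy (fun h => ho₀ ⟨x, h⟩)
    · exact congrArg some (hιinj hxy)
  let Feq : Option (Fin d) ≃ Option (Fin d) :=
    Equiv.ofBijective F ((Fintype.bijective_iff_injective_and_card F).2 ⟨hFinj, rfl⟩)
  -- the reordered basis
  let u : Module.Basis (Option (Fin d)) ℝ (ℝ × (Fin d → ℝ)) := u₀.reindex Feq.symm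
  have hu : ∀ o, u o = u₀ (F o) := fun o => by simp [u, Feq]
  have hspanu : Submodule.span ℤ (Set.range u) = Lsub := by
    rw [show Set.range ⇑u = Set.range ⇑u₀ from Module.Basis.range_reindex u₀ Feq.symm, hspan₀]
  set w : Option (Fin d) → (Fin d → ℝ) := fun o => (u o).2 with hw
  set c : Option (Fin d) → ℝ := fun o => (u o).1 with hc
  have hWind : LinearIndependent ℝ (fun i : Fin d => w (some i)) := by
    have h9 : (fun i : Fin d => w (some i)) = fun i : Fin d => f (ι i) := by
      funext i
      show (u (some i)).2 = f (ι i)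
      rw [hu]
      rfl
    rw [h9]; exact hind'
  -- the coordinate change on the second factor
  haveI : FiniteDimensional ℝ (Fin d → ℝ) := inferInstance
  let wB : Module.Basis (Fin d) ℝ (Fin d → ℝ) :=
    Module.Basis.mk hWind (hWind.span_eq_top_of_card_eq_finrank' (by simp [Module.finrank_fintype_fun_eq_card])).ge
  have hwB : ∀ i, wB i = w (some i) := fun i => by simp [wB]
  let φ : (Fin d → ℝ) ≃ₗ[ℝ] (Fin d → ℝ) := wB.equivFun
  have hφw : ∀ i j, φ (w (some i)) j = if i = j then 1 else 0 := by
    intro i j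
    rw [← hwB]
    exact wB.equivFun_self i j
  set α : Fin d → ℝ := φ (w none) with hα
  set δ : ℝ := c none - ∑ j, c (some j) * α j with hδdef
  -- nondegeneracy of `δ`
  have hδ : δ ≠ 0 := by
    intro h0
    set v  : ℝ × (Fin d → ℝ) := u none - ∑ j, α j • u (some j) with hv
    have hv2 : φ v.2 = 0 := by
      have : v.2 = w none - ∑ j, α j • w (some j) := by
        simp [hv, hw, Prod.snd_sum]
      rw [this, map_sub, map_sum]
      funext k
      simp only [map_smul, Pi.sub_apply, Finset.sum_apply, Pi.smul_apply, hφw, smul_eq_mul,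
        mul_ite, mul_one, mul_zero, Finset.sum_ite_eq, Finset.mem_univ, if_true]
      simp [hα]
    have hv2' : v.2 = 0 := by
      have := congrArg φ.symm hv2
      simpa using this
    have hv1 : v.1 = 0 := by
      have h4 : v.1 = c none - ∑ j, α j * c (some j) := by
        simp [hv, hc, Prod.fst_sum]
      rw [h4]
      rw [hδdef] at h0
      have : ∑ j, α j * c (some j) = ∑ j, c (some j) * α j :=
        Finset.sum_congr rfl fun j _ => mul_comm _ _
      rw [this]; linarith
    have hv0 : v = 0 := Prod.ext hv1 hv2'
    have hrepr : u.repr v none = 1 := by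
      rw [hv]
      simp [map_sub, map_sum, Finsupp.sub_apply, Finsupp.coe_finset_sum, u.repr_self]
    rw [hv0] at hrepr
    simp at hrepr
  set a : ℝ := δ⁻¹ with ha
  have haδ : a * δ = 1 := inv_mul_cancel₀ hδ
  have ha0 : a ≠ 0 := inv_ne_zero hδ
  set β : Fin d → ℝ := fun j => a * c (some j) with hβ
  have haKey : a * c none = 1 + ∑ i, β i * α i := by
    have : c none = δ + ∑ j, c (some j) * α j := by rw [hδdef]; ring
    rw [this, mul_add, haδ, Finset.mul_sum]
    congr 1
    exact Finset.sum_congr rfl fun j _ => by rw [hβ]; ring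
  -- the linear map `T`
  set Tlin : (ℝ × (Fin d → ℝ)) →ₗ[ℝ] (ℝ × (Fin d → ℝ)) := LinearMap.prodMap (a • LinearMap.id) φ.toLinearMap with hT
  have hTapp : ∀ p : ℝ × (Fin d → ℝ), Tlin p = (a * p.1, φ p.2) := fun p => rfl
  have hTu : ∀ n : Option (Fin d) → ℤ,
      Tlin (∑ o, n o • u o) =
        (((n none : ℝ) + ∑ i, β i * ((n none : ℝ) • α + fun j => (n (some j) : ℝ)) i,
          (n none : ℝ) • α + fun j => (n (some j) : ℝ))  : ℝ × (Fin d → ℝ)) := by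
    intro n
    rw [map_sum]
    simp_rw [map_zsmul Tlin, ← Int.cast_smul_eq_zsmul ℝ]
    rw [Fintype.sum_option]
    have h1 : Tlin (u none) = (1 + ∑ i, β i * α i, α) := by
      rw [hTapp]
      exact Prod.ext haKey rfl
    have h2 : ∀ i, Tlin (u (some i)) = (β i, fun j => if i = j then (1:ℝ) else 0) := by
      intro i
      rw [hTapp]
      refine Prod.ext rfl ?_
      funext j
      exact hφw i j
    rw [h1]
    simp_rw [h2]
    refine Prod.ext ?_ ?_
    · simp only [Prod.fst_add, Prod.fst_sum, Prod.smul_fst, smul_eq_mul]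
      have hrhs : ∀ i, β i * (((n none : ℝ) • α) i + (n (some i) : ℝ)) =
          (n none : ℝ) * (β i * α i) + (n (some i) : ℝ) * β i := fun i => by
        simp only [Pi.smul_apply, smul_eq_mul]; ring
      simp only [Pi.add_apply]
      rw [Finset.sum_congr rfl fun i _ => hrhs i, Finset.sum_add_distrib, ← Finset.mul_sum]
      ring
    · simp only [Prod.snd_add, Prod.snd_sum, Prod.smul_snd]
      congr 1
      funext k
      simp only [Finset.sum_apply, Pi.smul_apply, smul_eq_mul, mul_ite, mul_one, mul_zero]
      rw [Finset.sum_ite_eq']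
      simp
  -- membership description of `L`
  have himage : ∀ x : ℝ × (Fin d → ℝ), x ∈ (L : Set (ℝ × (Fin d → ℝ))) ↔
      ∃ n : Option (Fin d) → ℤ, ∑ o, n o • u o = x := by
    intro x
    rw [← Submodule.mem_span_range_iff_exists_fun ℤ, hspanu]
    exact Iff.rfl
  -- the matrix `B`
  set B : Matrix (Fin d) (Fin d) ℝ := LinearMap.toMatrix' (φ : (Fin d → ℝ) →ₗ[ℝ] (Fin d → ℝ))
    with hB
  have hBv : ∀ y, B.mulVec y = φ y := fun y => by
    rw [← Matrix.toLin'_apply, hB, Matrix.toLin'_toMatrix']; rfl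
  have hBdet : IsUnit B.det := by
    rw [hB, LinearMap.det_toMatrix']
    exact LinearEquiv.isUnit_det' φ
  -- the image equality
  have hset : (fun p : ℝ × (Fin d → ℝ) => (a * p.1, B.mulVec p.2)) '' (L : Set (ℝ × (Fin d → ℝ)))
      = specialFormLattice α β := by
    ext p
    simp only [Set.mem_image, specialFormLattice, Set.mem_setOf_eq]
    constructor
    · rintro ⟨x, hx, rfl⟩
      obtain ⟨n, rfl⟩ := (himage x).1 hx
      exact ⟨n none, fun j => n (some j), by rw [hBv, ← hTapp, hTu n]⟩
    · rintro ⟨n, m, rfl⟩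
      refine ⟨∑ o, (fun o => Option.elim o n m : Option (Fin d) → ℤ) o • u o,
        (himage _).2 ⟨_, rfl⟩, ?_⟩
      rw [hBv, ← hTapp, hTu (fun o => Option.elim o n m)]
      rfl
  -- the independence conditions (over `ℤ` first)
  have hZind2 : LinearIndependent ℤ (fun o : Option (Fin d) =>
      o.elim ((1:ℝ) + ∑ i, β i * α i) β) := by
    rw [Fintype.linearIndependent_iff]
    intro n hn o
    have hx : ∀ o : Option (Fin d), (Option.elim o ((1:ℝ) + ∑ i, β i * α i) β) = a * c o := by
      rintro (_ | j)
      · exact haKey.symm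
      · rfl
    set v  : ℝ × (Fin d → ℝ) := ∑ o', n o' • u o' with hv
    have hv1 : v.1 = ∑ o', (n o' : ℝ) * c o' := by
      rw [hv, Prod.fst_sum]
      exact Finset.sum_congr rfl fun o' _ => by
        rw [Prod.smul_fst, zsmul_eq_mul]
    have hva : a * v.1 = 0 := by
      rw [hv1, Finset.mul_sum, ← hn]
      exact Finset.sum_congr rfl fun o' _ => by rw [zsmul_eq_mul, hx o']; ring
    have hv10 : v.1 = Prod.fst (0  : ℝ × (Fin d → ℝ)) := by
      have := mul_eq_zero.1 hva
      simpa using this.resolve_left ha0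
    have huL : ∀ o', u o' ∈ (L : Set (ℝ × (Fin d → ℝ))) := by
      intro o'
      have h5 : u o' ∈ Submodule.span ℤ (Set.range u) :=
        Submodule.subset_span (Set.mem_range_self o')
      rw [hspanu] at h5
      exact h5
    have hvL : v ∈ (L : Set (ℝ × (Fin d → ℝ))) := by
      rw [hv]
      exact AddSubgroup.sum_mem L fun o' _ => AddSubgroup.zsmul_mem L (huL o') _
    have hv0 : v = 0 := hinj hvL (AddSubgroup.zero_mem L) hv10
    have hcast : ∑ o', (n o' : ℝ) • u o' = 0 := by
      rw [← hv0, hv]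
      exact Finset.sum_congr rfl fun o' _ => (Int.cast_smul_eq_zsmul ℝ _ _)
    have := Fintype.linearIndependent_iff.1 u.linearIndependent (fun o' => (n o' : ℝ)) hcast o
    exact_mod_cast this
  have hZind1 : LinearIndependent ℤ (fun o : Option (Fin d) => o.elim (1:ℝ) α) := by
    rw [Fintype.linearIndependent_iff]
    intro n hn
    have hgsum : (n none : ℝ) + ∑ j, (n (some j) : ℝ) * α j = 0 := by
      rw [← hn, Fintype.sum_option]
      simp [zsmul_eq_mul]
    have hj : ∀ j, n (some j) = 0 := by
      intro j₀
      by_contra hj₀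
      set ψ : (Fin d → ℝ) → ℝ := fun y => ∑ j, (n (some j) : ℝ) * φ y j with hψ
      have hφc : Continuous φ := LinearMap.continuous_of_finiteDimensional φ.toLinearMap
      have hψc : Continuous ψ :=
        continuous_finset_sum _ fun j _ => continuous_const.mul ((continuous_apply j).comp hφc)
      have hclosed : IsClosed (ψ ⁻¹' (Set.range ((↑) : ℤ → ℝ))) :=
        Int.isClosedEmbedding_coe_real.isClosed_range.preimage hψc
      have hsub : Prod.snd '' (L : Set (ℝ × (Fin d → ℝ))) ⊆ ψ ⁻¹' (Set.range ((↑) : ℤ → ℝ)) := by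
        rintro y ⟨x, hx, rfl⟩
        obtain ⟨m, rfl⟩ := (himage x).1 hx
        have hx2 : φ (∑ o, m o • u o).2 =
            (m none : ℝ) • α + fun j => (m (some j) : ℝ) := by
          have h6 := hTu m
          rw [hTapp] at h6
          exact congrArg Prod.snd h6
        refine ⟨-(m none) * (n none) + ∑ j, n (some j) * m (some j), ?_⟩
        rw [hψ]
        simp only [hx2, Pi.add_apply, Pi.smul_apply, smul_eq_mul]
        push_cast
        have h7 : ∀ j, (n (some j) : ℝ) * ((m none : ℝ) * α j + (m (some j) : ℝ)) =
            (m none : ℝ) * ((n (some j) : ℝ) * α j) + (n (some j) : ℝ) * (m (some j) : ℝ) :=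
          fun j => by ring
        rw [Finset.sum_congr rfl fun j _ => h7 j, Finset.sum_add_distrib, ← Finset.mul_sum]
        have h8 : ∑ j, (n (some j) : ℝ) * α j = -(n none : ℝ) := by linarith
        rw [h8]
        ring
      have hall : ∀ y, ψ y ∈ Set.range ((↑) : ℤ → ℝ) := by
        intro y
        have h1 : closure (Prod.snd '' (L : Set (ℝ × (Fin d → ℝ)))) = Set.univ := hdense.closure_eq
        have h2 := closure_minimal hsub hclosed
        rw [h1] at h2
        exact h2 (Set.mem_univ y)
      obtain ⟨k, hk⟩ := hall (φ.symm (Pi.single j₀ ((2 * (n (some j₀) : ℝ))⁻¹)))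
      have hnj : (n (some j₀) : ℝ) ≠ 0 := Int.cast_ne_zero.2 hj₀
      have hval : ψ (φ.symm (Pi.single j₀ ((2 * (n (some j₀) : ℝ))⁻¹))) = 2⁻¹ := by
        rw [hψ]
        simp only [LinearEquiv.apply_symm_apply, Pi.single_apply, mul_ite, mul_zero]
        rw [Finset.sum_ite_eq']
        simp only [Finset.mem_univ, if_true]
        rw [mul_inv]
        field_simp
      rw [hval] at hk
      have h2k : ((2 * k : ℤ) : ℝ) = ((1 : ℤ) : ℝ) := by push_cast; rw [hk]; norm_num
      have := Int.cast_injective h2k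
      omega
    intro o
    cases o with
    | none =>
      have : (n none : ℝ) = 0 := by
        rw [← hgsum]
        simp [hj]
      exact_mod_cast this
    | some j => exact hj j
  -- move to `ℚ`-independence
  have hQind1 : LinearIndependent ℚ (fun o : Option (Fin d) => o.elim (1:ℝ) α) :=
    hZind1.localization ℚ (nonZeroDivisors ℤ)
  have hQind2 : LinearIndependent ℚ (fun o : Option (Fin d) =>
      o.elim ((1:ℝ) + ∑ i, β i * α i) β) :=
    hZind2.localization ℚ (nonZeroDivisors ℤ)
  exact ⟨a, B, α, β, ha0, hBdet, hQind1, hQind2, hset⟩
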